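/- Full SL₂-equivariance of the Wronski map: for p_1, …, p_k ∈ P_n, a fractional linear transformation z = (aẑ + b)/(cẑ + d) with ad − bc = 1, and p̂_i(ẑ) = (cẑ + d)^n p_i((aẑ+b)/(cẑ+d)), one has W(p̂_1, …, p̂_k)(ẑ) = (cẑ + d)^{kℓ} W(p_1, …, p_k)((aẑ+b)/(cẑ+d)), where ℓ = n + 1 − k. -/

import Mathlib

open Polynomial Finset

/-- The Wronskian `W(p_1, …, p_k) = det(p_i^{(j−1)})_{1≤i,j≤k}`. -/
noncomputable def wronskian' (k : ℕ) (p : Fin k → Polynomial ℂ) : Polynomial ℂ :=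
  Matrix.det (Matrix.of fun i j : Fin k =>
    (fun q : Polynomial ℂ => Polynomial.derivative q)^[(j : ℕ)] (p i))

/-- The `SL₂(ℂ)` action on `P_n`: the polynomial `ẑ ↦ (cẑ + d)^n p((aẑ + b)/(cẑ + d))`. -/
noncomputable def sl2Act (a b c d : ℂ) (n : ℕ) (p : Polynomial ℂ) : Polynomial ℂ :=
  ∑ j ∈ Finset.range (n + 1),
    C (p.coeff j) * (C a * X + C b) ^ j * (C c * X + C d) ^ (n - j)


/-! ### Auxiliary development -/

section SL2Aux

variable (a b c d : ℂ)

lemma ne_zero_lin (hcd : c ≠ 0 ∨ d ≠ 0) : (C c * X + C d : Polynomial ℂ) ≠ 0 := by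
  intro h
  have h1 := congrArg (fun q => Polynomial.coeff q 1) h
  have h0 := congrArg (fun q => Polynomial.coeff q 0) h
  simp [coeff_add, coeff_C_mul, coeff_C] at h1 h0
  rcases hcd with hc | hd
  · exact hc h1
  · exact hd h0

lemma inf_set (hcd : c ≠ 0 ∨ d ≠ 0) : {z : ℂ | c * z + d ≠ 0}.Infinite := by
  have hf : {z : ℂ | c * z + d = 0}.Finite := by
    have := Polynomial.finite_setOf_isRoot (ne_zero_lin c d hcd)
    apply this.subset
    intro z hz
    simp only [Set.mem_setOf_eq] at hz ⊢
    simp [IsRoot, hz]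
  have : {z : ℂ | c * z + d ≠ 0} = {z : ℂ | c * z + d = 0}ᶜ := by
    ext z; simp
  rw [this]
  exact hf.infinite_compl

lemma eval_sl2Act {n : ℕ} {h : Polynomial ℂ} (hh : h.natDegree ≤ n) (z : ℂ)
    (hz : c * z + d ≠ 0) :
    eval z (sl2Act a b c d n h) = (c * z + d) ^ n * eval ((a * z + b) / (c * z + d)) h := by
  rw [sl2Act, eval_finset_sum,
    Polynomial.eval_eq_sum_range' (lt_of_le_of_lt hh (Nat.lt_succ_self n)), Finset.mul_sum]
  apply Finset.sum_congr rfl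
  intro j hj
  simp only [Finset.mem_range] at hj
  have hjn : j ≤ n := Nat.lt_succ_iff.mp hj
  simp only [eval_mul, eval_pow, eval_add, eval_C, eval_X]
  have hpow : (c * z + d) ^ n = (c * z + d) ^ (n - j) * (c * z + d) ^ j := by
    rw [← pow_add]; congr 1; omega
  rw [hpow, div_pow]
  field_simp
  have hz' : z * c + d ≠ 0 := by rw [mul_comm]; exact hz
  have hI : (z * c + d)⁻¹ ^ j * (z * c + d) ^ j = 1 := by
    rw [← mul_pow, inv_mul_cancel₀ hz', one_pow]
  linear_combination (-(h.coeff j * (a * z + b) ^ j * (z * c + d) ^ (n - j))) * hI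

/-- `sl2Act` as a `ℂ`-linear map in the polynomial argument. -/
noncomputable def TL (n : ℕ) : Polynomial ℂ →ₗ[ℂ] Polynomial ℂ where
  toFun := sl2Act a b c d n
  map_add' x y := by
    simp only [sl2Act, coeff_add, C_add, add_mul, Finset.sum_add_distrib]
  map_smul' r x := by
    simp only [sl2Act, coeff_smul, smul_eq_mul, C_mul, RingHom.id_apply, Finset.smul_sum,
      Polynomial.smul_eq_C_mul, mul_assoc, coeff_C_mul]

lemma mul_T (hcd : c ≠ 0 ∨ d ≠ 0) {s t : ℕ} {x y : Polynomial ℂ}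
    (hx : x.natDegree ≤ s) (hy : y.natDegree ≤ t) :
    sl2Act a b c d s x * sl2Act a b c d t y = sl2Act a b c d (s + t) (x * y) := by
  apply eq_of_infinite_eval_eq
  apply (inf_set c d hcd).mono
  intro z hz
  simp only [Set.mem_setOf_eq] at hz ⊢
  rw [eval_mul, eval_sl2Act a b c d hx z hz, eval_sl2Act a b c d hy z hz,
    eval_sl2Act a b c d (natDegree_mul_le.trans (add_le_add hx hy)) z hz, eval_mul, pow_add]
  ring

lemma shift_T (hcd : c ≠ 0 ∨ d ≠ 0) {s : ℕ} (t : ℕ) {x : Polynomial ℂ} (hx : x.natDegree ≤ s) :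
    sl2Act a b c d (s + t) x = (C c * X + C d) ^ t * sl2Act a b c d s x := by
  apply eq_of_infinite_eval_eq
  apply (inf_set c d hcd).mono
  intro z hz
  simp only [Set.mem_setOf_eq] at hz ⊢
  rw [eval_mul, eval_sl2Act a b c d hx z hz,
    eval_sl2Act a b c d (hx.trans (Nat.le_add_right s t)) z hz,
    eval_pow, eval_add, eval_mul, eval_C, eval_C, eval_X, pow_add]
  ring

lemma T_one : sl2Act a b c d 0 1 = 1 := by
  simp [sl2Act]

lemma prod_T (hcd : c ≠ 0 ∨ d ≠ 0) {ι : Type*} (s : Finset ι) (e : ι → ℕ) (g : ι → Polynomial ℂ)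
    (hg : ∀ i ∈ s, (g i).natDegree ≤ e i) :
    ∏ i ∈ s, sl2Act a b c d (e i) (g i) = sl2Act a b c d (∑ i ∈ s, e i) (∏ i ∈ s, g i) := by
  induction s using Finset.cons_induction with
  | empty => simpa using (T_one a b c d).symm
  | cons i s hi ih =>
    rw [Finset.prod_cons, Finset.prod_cons, Finset.sum_cons,
      ih (fun j hj => hg j (Finset.mem_cons_of_mem hj)),
      mul_T a b c d hcd (hg i (Finset.mem_cons_self i s))
        ((natDegree_prod_le s g).trans
          (Finset.sum_le_sum fun j hj => hg j (Finset.mem_cons_of_mem hj)))]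

lemma hcd_of_det (hdet : a * d - b * c = 1) : c ≠ 0 ∨ d ≠ 0 := by
  by_contra h
  push_neg at h
  rw [h.1, h.2] at hdet
  simp at hdet

lemma key (hdet : a * d - b * c = 1) (s : ℕ) (h : Polynomial ℂ) (hh : h.natDegree ≤ s + 1) :
    (C c * X + C d) * derivative (sl2Act a b c d (s + 1) h) =
      sl2Act a b c d s (derivative h) + C (((s : ℂ) + 1) * c) * sl2Act a b c d (s + 1) h := by
  have hcd := hcd_of_det a b c d hdet
  have hh' : (derivative h).natDegree ≤ s :=
    (natDegree_derivative_le h).trans (by omega)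
  apply eq_of_infinite_eval_eq
  apply (inf_set c d hcd).mono
  intro z hz
  simp only [Set.mem_setOf_eq] at hz ⊢
  have hU : IsOpen {w : ℂ | c * w + d ≠ 0} :=
    isOpen_ne.preimage (by continuity)
  have heq : (fun w => eval w (sl2Act a b c d (s + 1) h)) =ᶠ[nhds z]
      (fun w => (c * w + d) ^ (s + 1) * eval ((a * w + b) / (c * w + d)) h) := by
    filter_upwards [hU.mem_nhds hz] with w hw using eval_sl2Act a b c d hh w hw
  have hd1 : eval z (derivative (sl2Act a b c d (s + 1) h)) =
      deriv (fun w => (c * w + d) ^ (s + 1) * eval ((a * w + b) / (c * w + d)) h) z := by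
    rw [← Polynomial.deriv]
    exact heq.deriv_eq
  have h1 : HasDerivAt (fun w : ℂ => c * w + d) c z := by
    simpa using ((hasDerivAt_id z).const_mul c).add_const d
  have h2 : HasDerivAt (fun w : ℂ => (c * w + d) ^ (s + 1))
      (((s : ℂ) + 1) * (c * z + d) ^ s * c) z := by
    have := h1.fun_pow (s + 1)
    simpa using this
  have h3 : HasDerivAt (fun w : ℂ => a * w + b) a z := by
    simpa using ((hasDerivAt_id z).const_mul a).add_const b
  have h4 : HasDerivAt (fun w : ℂ => (a * w + b) / (c * w + d)) (1 / (c * z + d) ^ 2) z := by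
    have hdiv := h3.div h1 hz
    have hnum : a * (c * z + d) - (a * z + b) * c = 1 := by linear_combination hdet
    rw [hnum] at hdiv
    exact hdiv
  have h5 : HasDerivAt (fun w : ℂ => eval ((a * w + b) / (c * w + d)) h)
      (eval ((a * z + b) / (c * z + d)) (derivative h) * (1 / (c * z + d) ^ 2)) z := by
    have := (Polynomial.hasDerivAt h ((a * z + b) / (c * z + d))).comp z h4
    simpa [Function.comp_def] using this
  have H := h2.fun_mul h5
  rw [eval_mul, eval_add, eval_mul, eval_C, eval_C, eval_X, hd1, H.deriv,
    eval_add, eval_mul, eval_C, eval_sl2Act a b c d hh' z hz, eval_sl2Act a b c d hh z hz]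
  have hz2 : (c * z + d) ^ 2 ≠ 0 := pow_ne_zero _ hz
  field_simp
  ring

end SL2Aux

noncomputable def Ac (n : ℕ) (c : ℂ) : ℕ → ℕ → ℂ
  | 0, 0 => 1
  | 0, _ + 1 => 0
  | j + 1, 0 => ((n : ℂ) - j) * c * Ac n c j 0
  | j + 1, m + 1 => ((n : ℂ) - j - (m + 1)) * c * Ac n c j (m + 1) + Ac n c j m

lemma Ac_eq_zero (n : ℕ) (c : ℂ) : ∀ j m, j < m → Ac n c j m = 0 := by
  intro j
  induction j with
  | zero => intro m hm; match m, hm with | m + 1, _ => rfl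
  | succ j ih =>
    intro m hm
    match m, hm with
    | m + 1, hm =>
      have h1 : j < m + 1 := by omega
      have h2 : j < m := by omega
      simp [Ac, ih _ h1, ih _ h2]

lemma Ac_diag (n : ℕ) (c : ℂ) : ∀ j, Ac n c j j = 1 := by
  intro j
  induction j with
  | zero => rfl
  | succ j ih => simp [Ac, ih, Ac_eq_zero n c j (j + 1) (by omega)]

section SL2Aux2

variable (a b c d : ℂ)

lemma qpow_deriv (j : ℕ) :
    (C c * X + C d) * derivative ((C c * X + C d) ^ j) = C ((j : ℂ) * c) * (C c * X + C d) ^ j := by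
  cases j with
  | zero => simp
  | succ j =>
    rw [derivative_pow]
    have hq : derivative (C c * X + C d) = C c := by
      simp
    rw [hq]
    simp only [Nat.add_sub_cancel, Nat.cast_add, Nat.cast_one, C_add, C_mul, C_1]
    ring

lemma iter_deriv (hdet : a * d - b * c = 1) {n : ℕ} (h : Polynomial ℂ) (hh : h.natDegree ≤ n) :
    ∀ j, j ≤ n →
      (C c * X + C d) ^ j * ((fun q : Polynomial ℂ => derivative q)^[j] (sl2Act a b c d n h)) =
        ∑ m ∈ Finset.range (j + 1),
          C (Ac n c j m) * sl2Act a b c d (n - m) ((fun q : Polynomial ℂ => derivative q)^[m] h) := by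
  intro j
  induction j with
  | zero => intro _; simp [Ac]
  | succ j ih =>
    intro hj1
    have hj : j ≤ n := by omega
    have IH := ih hj
    set q : Polynomial ℂ := C c * X + C d with hq
    set T := sl2Act a b c d with hT
    have hGdeg : ∀ m, (((fun q : Polynomial ℂ => derivative q)^[m] h)).natDegree ≤ n - m := fun m =>
      (natDegree_iterate_derivative h m).trans (Nat.sub_le_sub_right hh m)
    have hder : derivative (q ^ j * ((fun q : Polynomial ℂ => derivative q)^[j] (T n h))) =
        derivative (q ^ j) * ((fun q : Polynomial ℂ => derivative q)^[j] (T n h))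
          + q ^ j * ((fun q : Polynomial ℂ => derivative q)^[j + 1] (T n h)) := by
      rw [derivative_mul, Function.iterate_succ_apply']
    have hC := qpow_deriv c d j
    have hderIH := congrArg derivative IH
    have step1 : q ^ (j + 1) * ((fun q : Polynomial ℂ => derivative q)^[j + 1] (T n h)) =
        q * derivative (∑ m ∈ Finset.range (j + 1),
            C (Ac n c j m) * T (n - m) ((fun q : Polynomial ℂ => derivative q)^[m] h))
          - C ((j : ℂ) * c) * ∑ m ∈ Finset.range (j + 1),
            C (Ac n c j m) * T (n - m) ((fun q : Polynomial ℂ => derivative q)^[m] h) := by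
      linear_combination q * hderIH - q * hder
        - ((fun q : Polynomial ℂ => derivative q)^[j] (T n h)) * hC - C ((j : ℂ) * c) * IH
    have step2 : q * derivative (∑ m ∈ Finset.range (j + 1),
          C (Ac n c j m) * T (n - m) ((fun q : Polynomial ℂ => derivative q)^[m] h)) =
        ∑ m ∈ Finset.range (j + 1), C (Ac n c j m) *
          (T (n - (m + 1)) ((fun q : Polynomial ℂ => derivative q)^[m + 1] h)
            + C (((n : ℂ) - m) * c) * T (n - m) ((fun q : Polynomial ℂ => derivative q)^[m] h)) := by
      rw [derivative_sum, Finset.mul_sum]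
      apply Finset.sum_congr rfl
      intro m hm
      simp only [Finset.mem_range] at hm
      have hmn : m < n := by omega
      rw [derivative_C_mul, mul_left_comm]
      refine congrArg (C (Ac n c j m) * ·) ?_
      have e1 : n - m = (n - (m + 1)) + 1 := by omega
      have hkey := key a b c d hdet (n - (m + 1)) ((fun q : Polynomial ℂ => derivative q)^[m] h)
        (by rw [← e1]; exact hGdeg m)
      rw [hT, e1, hkey]
      have e2 : derivative ((fun q : Polynomial ℂ => derivative q)^[m] h)
          = (fun q : Polynomial ℂ => derivative q)^[m + 1] h :=
        (Function.iterate_succ_apply' _ _ _).symm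
      have e3 : ((n - (m + 1) : ℕ) : ℂ) + 1 = (n : ℂ) - m := by
        rw [Nat.cast_sub (by omega : m + 1 ≤ n)]; push_cast; ring
      rw [e2, e3]
    rw [step1, step2, Finset.mul_sum, ← Finset.sum_sub_distrib]
    have hsplit : ∀ m ∈ Finset.range (j + 1),
        C (Ac n c j m) * (T (n - (m + 1)) ((fun q : Polynomial ℂ => derivative q)^[m + 1] h)
            + C (((n : ℂ) - m) * c) * T (n - m) ((fun q : Polynomial ℂ => derivative q)^[m] h))
          - C ((j : ℂ) * c) * (C (Ac n c j m) * T (n - m) ((fun q : Polynomial ℂ => derivative q)^[m] h))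
        = C (Ac n c j m) * T (n - (m + 1)) ((fun q : Polynomial ℂ => derivative q)^[m + 1] h)
          + C (Ac n c j m * (((n : ℂ) - m - j) * c)) * T (n - m) ((fun q : Polynomial ℂ => derivative q)^[m] h) := by
      intro m _
      simp only [C_mul, C_sub, C_add]
      ring
    rw [Finset.sum_congr rfl hsplit, Finset.sum_add_distrib]
    conv_rhs => rw [Finset.sum_range_succ']
    have hS2 : ∑ m ∈ Finset.range (j + 1),
          C (Ac n c j m * (((n : ℂ) - m - j) * c)) * T (n - m) ((fun q : Polynomial ℂ => derivative q)^[m] h)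
        = (∑ i ∈ Finset.range (j + 1),
            C (Ac n c j (i + 1) * (((n : ℂ) - ((i : ℂ) + 1) - j) * c)) * T (n - (i + 1)) ((fun q : Polynomial ℂ => derivative q)^[i + 1] h))
          + C (Ac n c j 0 * (((n : ℂ) - (0 : ℂ) - j) * c)) * T (n - 0) ((fun q : Polynomial ℂ => derivative q)^[0] h) := by
      rw [Finset.sum_range_succ']
      conv_rhs => rw [Finset.sum_range_succ]
      rw [Ac_eq_zero n c j (j + 1) (by omega)]
      simp only [zero_mul, map_zero]
      push_cast
      ring
    rw [hS2, ← add_assoc, ← Finset.sum_add_distrib]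
    congr 1
    · apply Finset.sum_congr rfl
      intro i _
      have hrec : Ac n c (j + 1) (i + 1)
          = ((n : ℂ) - j - ((i : ℂ) + 1)) * c * Ac n c j (i + 1) + Ac n c j i := by
        simp [Ac]
      rw [hrec]
      simp only [C_mul, C_sub, C_add, C_1]
      ring
    · have hrec0 : Ac n c (j + 1) 0 = ((n : ℂ) - j) * c * Ac n c j 0 := by simp [Ac]
      rw [hrec0]
      simp only [C_mul, C_sub, C_add, C_1, C_0, Function.iterate_zero_apply]
      ring

end SL2Aux2

section SL2Aux3

variable (a b c d : ℂ)

lemma main_identity (hdet : a * d - b * c = 1) (k n : ℕ) (hk : k ≤ n + 1)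
    (p : Fin k → Polynomial ℂ) (hdeg : ∀ i, (p i).natDegree ≤ n) :
    (C c * X + C d) ^ (∑ i : Fin k, (i : ℕ)) *
        wronskian' k (fun i => sl2Act a b c d n (p i)) =
      sl2Act a b c d (∑ i : Fin k, (n - (i : ℕ))) (wronskian' k p) := by
  have hcd := hcd_of_det a b c d hdet
  set q : Polynomial ℂ := C c * X + C d with hq
  -- the three matrices
  set M : Matrix (Fin k) (Fin k) (Polynomial ℂ) := Matrix.of fun i j : Fin k =>
    (fun r : Polynomial ℂ => derivative r)^[(j : ℕ)] (sl2Act a b c d n (p i)) with hM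
  set N : Matrix (Fin k) (Fin k) (Polynomial ℂ) := Matrix.of fun i m : Fin k =>
    sl2Act a b c d (n - (m : ℕ)) ((fun r : Polynomial ℂ => derivative r)^[(m : ℕ)] (p i)) with hN
  set A : Matrix (Fin k) (Fin k) (Polynomial ℂ) := Matrix.of fun m j : Fin k =>
    C (Ac n c (j : ℕ) (m : ℕ)) with hA
  have hWdef : wronskian' k (fun i => sl2Act a b c d n (p i)) = M.det := rfl
  rw [hWdef]
  have h1 : q ^ (∑ i : Fin k, (i : ℕ)) * M.det
      = (Matrix.of fun i j : Fin k => q ^ (j : ℕ) * M i j).det := by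
    rw [Matrix.det_mul_row (fun j : Fin k => q ^ (j : ℕ)) M, Finset.prod_pow_eq_pow_sum]
  rw [h1]
  have h2 : (Matrix.of fun i j : Fin k => q ^ (j : ℕ) * M i j) = N * A := by
    refine Matrix.ext fun i j => ?_
    simp only [Matrix.of_apply, Matrix.mul_apply, hN, hM, hA]
    have hjn : (j : ℕ) ≤ n := by have := j.isLt; omega
    rw [iter_deriv a b c d hdet (p i) (hdeg i) (j : ℕ) hjn]
    rw [Fin.sum_univ_eq_sum_range (fun m => sl2Act a b c d (n - m)
      ((fun r : Polynomial ℂ => derivative r)^[m] (p i)) * C (Ac n c (j : ℕ) m)) k]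
    have hsub : Finset.range ((j : ℕ) + 1) ⊆ Finset.range k :=
      Finset.range_subset_range.mpr j.isLt
    have hext := Finset.sum_subset (f := fun m => sl2Act a b c d (n - m)
        ((fun r : Polynomial ℂ => derivative r)^[m] (p i)) * C (Ac n c (j : ℕ) m)) hsub
      (fun m hm hnm => by
        have hlt : (j : ℕ) < m := by
          simp only [Finset.mem_range] at hm hnm; omega
        show sl2Act a b c d (n - m) ((fun r : Polynomial ℂ => derivative r)^[m] (p i)) *
          C (Ac n c (j : ℕ) m) = 0
        rw [Ac_eq_zero n c _ _ hlt, map_zero, mul_zero])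
    rw [← hext]
    apply Finset.sum_congr rfl
    intro m _
    exact mul_comm _ _
  rw [h2, Matrix.det_mul]
  have h3 : A.det = 1 := by
    have htri : ∀ i j : Fin k, j < i → A i j = 0 := by
      intro i j hij
      show C (Ac n c (j : ℕ) (i : ℕ)) = 0
      rw [Ac_eq_zero n c (j : ℕ) (i : ℕ) hij, map_zero]
    rw [Matrix.det_of_upperTriangular htri]
    have hdiag : ∀ i : Fin k, A i i = 1 := by
      intro i
      show C (Ac n c (i : ℕ) (i : ℕ)) = 1
      rw [Ac_diag n c, map_one]
    simp [hdiag]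
  rw [h3, mul_one]
  -- det N = T D (wronskian' k p)
  set D := ∑ i : Fin k, (n - (i : ℕ)) with hD
  rw [Matrix.det_apply]
  have hterm : ∀ σ : Equiv.Perm (Fin k),
      ∏ i : Fin k, N (σ i) i
        = TL a b c d D (∏ i : Fin k,
            (fun r : Polynomial ℂ => derivative r)^[i.val] (p (σ i))) := by
    intro σ
    exact prod_T a b c d hcd (Finset.univ : Finset (Fin k))
      (fun i : Fin k => n - i.val)
      (fun i : Fin k => (fun r : Polynomial ℂ => derivative r)^[i.val] (p (σ i)))
      (fun i _ => (natDegree_iterate_derivative (p (σ i)) i.val).trans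
        (Nat.sub_le_sub_right (hdeg (σ i)) i.val))
  calc ∑ σ : Equiv.Perm (Fin k), Equiv.Perm.sign σ • ∏ i : Fin k, N (σ i) i
      = ∑ σ : Equiv.Perm (Fin k), TL a b c d D ((Equiv.Perm.sign σ : ℤ) • ∏ i : Fin k,
          (fun r : Polynomial ℂ => derivative r)^[i.val] (p (σ i))) := by
        apply Finset.sum_congr rfl
        intro σ _
        rw [hterm σ, Units.smul_def, map_zsmul]
    _ = TL a b c d D (∑ σ : Equiv.Perm (Fin k), (Equiv.Perm.sign σ : ℤ) • ∏ i : Fin k,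
          (fun r : Polynomial ℂ => derivative r)^[i.val] (p (σ i))) := by
        rw [map_sum]
    _ = sl2Act a b c d D (wronskian' k p) := by
        have hw : (∑ σ : Equiv.Perm (Fin k), (Equiv.Perm.sign σ : ℤ) • ∏ i : Fin k,
            (fun r : Polynomial ℂ => derivative r)^[i.val] (p (σ i))) = wronskian' k p := by
          rw [wronskian', Matrix.det_apply]
          apply Finset.sum_congr rfl
          intro σ _
          rw [Units.smul_def]
          rfl
        rw [hw]
        rfl

end SL2Aux3

lemma sum_sub_eq (k n : ℕ) (hk : k ≤ n + 1) :
    ∑ i ∈ Finset.range k, (n - i) = k * (n + 1 - k) + ∑ i ∈ Finset.range k, i := by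
  induction k with
  | zero => simp
  | succ k ih =>
    have hk' : k ≤ n + 1 := by omega
    rw [Finset.sum_range_succ, Finset.sum_range_succ, ih hk']
    have e1 : n + 1 - k = (n - k) + 1 := by omega
    have e2 : n + 1 - (k + 1) = n - k := by omega
    rw [e1, e2, Nat.mul_add, Nat.succ_mul]
    omega

lemma wdeg_weak (k n : ℕ) (p : Fin k → Polynomial ℂ) (hdeg : ∀ i, (p i).natDegree ≤ n) :
    (wronskian' k p).natDegree ≤ ∑ i ∈ Finset.range k, (n - i) := by
  rw [wronskian', Matrix.det_apply]
  apply natDegree_sum_le_of_forall_le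
  intro σ _
  rw [Units.smul_def, zsmul_eq_mul]
  apply (natDegree_mul_le).trans
  rw [natDegree_intCast, zero_add]
  apply (natDegree_prod_le _ _).trans
  rw [← Fin.sum_univ_eq_sum_range (fun i => n - i) k]
  apply Finset.sum_le_sum
  intro i _
  exact (natDegree_iterate_derivative _ _).trans (Nat.sub_le_sub_right (hdeg (σ i)) _)

lemma wdeg (k n : ℕ) (hk : k ≤ n + 1) (p : Fin k → Polynomial ℂ)
    (hdeg : ∀ i, (p i).natDegree ≤ n) :
    (wronskian' k p).natDegree ≤ k * (n + 1 - k) := by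
  set W := wronskian' k p with hW
  set D : ℕ := ∑ i ∈ Finset.range k, (n - i) with hD
  set e : ℕ := ∑ i ∈ Finset.range k, i with he
  have hDe : D = k * (n + 1 - k) + e := sum_sub_eq k n hk
  have hid := main_identity 0 (-1) 1 0 (by ring) k n hk p hdeg
  have hq : (C (1:ℂ) * X + C 0 : Polynomial ℂ) = X := by simp
  have hr : (C (0:ℂ) * X + C (-1) : Polynomial ℂ) = -1 := by simp
  rw [hq] at hid
  have hsums : (∑ i : Fin k, (i : ℕ)) = e := Fin.sum_univ_eq_sum_range (fun i => i) k
  have hsumD : (∑ i : Fin k, (n - (i : ℕ))) = D := Fin.sum_univ_eq_sum_range (fun i => n - i) k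
  rw [hsums, hsumD] at hid
  rw [natDegree_le_iff_coeff_eq_zero]
  intro m hm
  by_cases hmD : D < m
  · exact coeff_eq_zero_of_natDegree_lt (lt_of_le_of_lt (wdeg_weak k n p hdeg) hmD)
  · push_neg at hmD
    -- extract coefficient D - m from the identity
    have hcoeff := congrArg (fun f => Polynomial.coeff f (D - m)) hid
    have hL : (X ^ e * wronskian' k fun i => sl2Act 0 (-1) 1 0 n (p i)).coeff (D - m) = 0 := by
      rw [Polynomial.X_pow_mul, Polynomial.coeff_mul_X_pow']
      have : ¬ (e ≤ D - m) := by omega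
      rw [if_neg this]
    rw [hL] at hcoeff
    -- RHS coefficient
    have hR : (sl2Act 0 (-1) 1 0 D W).coeff (D - m) = W.coeff m * (-1 : ℂ) ^ m := by
      rw [sl2Act, Polynomial.finset_sum_coeff]
      rw [Finset.sum_eq_single_of_mem m (Finset.mem_range.mpr (by omega))]
      · rw [hr, hq]
        have : ((-1 : Polynomial ℂ)) ^ m = C ((-1 : ℂ) ^ m) := by
          rw [← map_one C, ← map_neg, ← map_pow]
        rw [this, ← C_mul, coeff_C_mul, coeff_X_pow, if_pos rfl, mul_one]
      · intro j hj hjm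
        rw [hr, hq]
        have : ((-1 : Polynomial ℂ)) ^ j = C ((-1 : ℂ) ^ j) := by
          rw [← map_one C, ← map_neg, ← map_pow]
        rw [this, ← C_mul, coeff_C_mul, coeff_X_pow]
        have hne : ¬ (D - m = D - j) := by
          simp only [Finset.mem_range] at hj
          omega
        rw [if_neg hne, mul_zero]
    rw [hR] at hcoeff
    have hne : ((-1 : ℂ)) ^ m ≠ 0 := pow_ne_zero _ (by norm_num)
    exact (mul_eq_zero.mp hcoeff.symm).resolve_right hne

/-- full `SL₂`-equivariance of the Wronski map: for `p_1, …, p_k ∈ P_n`,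
`ad − bc = 1`, `ℓ = n + 1 − k`, and `p̂_i(ẑ) = (cẑ+d)^n p_i((aẑ+b)/(cẑ+d))`, one has
`W(p̂_1, …, p̂_k)(ẑ) = (cẑ+d)^{kℓ} W(p_1, …, p_k)((aẑ+b)/(cẑ+d))`, the right-hand side
being the `SL₂` action at level `kℓ` applied to `W(p_1, …, p_k) ∈ P_{kℓ}`. -/
theorem wronskian_sl2_equivariant (k n : ℕ) (hk : k ≤ n + 1)
    (a b c d : ℂ) (hdet : a * d - b * c = 1)
    (p : Fin k → Polynomial ℂ) (hdeg : ∀ i, (p i).natDegree ≤ n) :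
    wronskian' k (fun i => sl2Act a b c d n (p i)) =
      sl2Act a b c d (k * (n + 1 - k)) (wronskian' k p) := by
  have hcd := hcd_of_det a b c d hdet
  have hid := main_identity a b c d hdet k n hk p hdeg
  have hsumD : (∑ i : Fin k, (n - (i : ℕ))) = ∑ i ∈ Finset.range k, (n - i) :=
    Fin.sum_univ_eq_sum_range (fun i => n - i) k
  have hsums : (∑ i : Fin k, (i : ℕ)) = ∑ i ∈ Finset.range k, i :=
    Fin.sum_univ_eq_sum_range (fun i => i) k
  rw [hsumD, hsums, sum_sub_eq k n hk] at hid
  rw [shift_T a b c d hcd (∑ i ∈ Finset.range k, i) (wdeg k n hk p hdeg)] at hid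
  exact mul_left_cancel₀ (pow_ne_zero _ (ne_zero_lin c d hcd)) hid
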